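/- Let q be a nonzero integer and s an integer with s^2 = q. Let d ≥ 1 and let c_0, …, c_{d−1}, e_1, …, e_d be integers with e_d ∈ {1, −1}, and set h₀ = F^d + Σ_{i=0}^{d−1} c_i F^i + Σ_{j=1}^{d} e_j V^j in ℤ[F,V]. Then the quotient ring ℤ[F,V]/(FV − q, h₀·(F − s), h₀·(V − s)) is a free ℤ-module of rank 2d + 1, and the residue classes of the monomials F^d, …, F, 1, V, …, V^d form a ℤ-basis of it. -/

import Mathlib

open MvPolynomial

/-- The variable `F` in `ℤ[F, V]`. -/
noncomputable def Fvar : MvPolynomial (Fin 2) ℤ := X 0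

/-- The variable `V` in `ℤ[F, V]`. -/
noncomputable def Vvar : MvPolynomial (Fin 2) ℤ := X 1

/-- The polynomial `h₀ = F^d + Σ_{i=0}^{d-1} c_i F^i + Σ_{j=1}^{d} e_j V^j ∈ ℤ[F, V]`. -/
noncomputable def hPoly (d : ℕ) (c e : ℕ → ℤ) : MvPolynomial (Fin 2) ℤ :=
  Fvar ^ d + (∑ i ∈ Finset.range d, C (c i) * Fvar ^ i) +
    ∑ j ∈ Finset.Icc 1 d, C (e j) * Vvar ^ j

noncomputable section StmtAux

variable (q s : ℤ) (d : ℕ) (c e : ℕ → ℤ)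

def stIdeal : Ideal (MvPolynomial (Fin 2) ℤ) :=
  Ideal.span {Fvar * Vvar - C q, hPoly d c e * (Fvar - C s), hPoly d c e * (Vvar - C s)}

abbrev Rq := MvPolynomial (Fin 2) ℤ ⧸ stIdeal q s d c e

def mkq : MvPolynomial (Fin 2) ℤ →+* Rq q s d c e := Ideal.Quotient.mk _

def stF : Rq q s d c e := mkq q s d c e Fvar
def stV : Rq q s d c e := mkq q s d c e Vvar

lemma mkq_eq_zero {p : MvPolynomial (Fin 2) ℤ} (hp : p ∈ stIdeal q s d c e) :
    mkq q s d c e p = 0 := (Ideal.Quotient.eq_zero_iff_mem).2 hp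

lemma rel_FV : stF q s d c e * stV q s d c e = (q : Rq q s d c e) := by
  have h := mkq_eq_zero q s d c e (p := Fvar * Vvar - C q)
    (Ideal.subset_span (by simp))
  have : mkq q s d c e (Fvar * Vvar) = mkq q s d c e (C q) := by
    rw [← sub_eq_zero, ← map_sub]; exact h
  simpa [stF, stV, map_intCast] using this

lemma mkq_hPoly : mkq q s d c e (hPoly d c e) =
    stF q s d c e ^ d + (∑ i ∈ Finset.range d, (c i : Rq q s d c e) * stF q s d c e ^ i) +
      ∑ j ∈ Finset.Icc 1 d, (e j : Rq q s d c e) * stV q s d c e ^ j := by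
  simp [hPoly, stF, stV, map_sum, map_intCast]

lemma rel_hF : mkq q s d c e (hPoly d c e) * (stF q s d c e - (s : Rq q s d c e)) = 0 := by
  have h := mkq_eq_zero q s d c e (p := hPoly d c e * (Fvar - C s))
    (Ideal.subset_span (by simp))
  simpa [stF, map_intCast, sub_eq_add_neg] using h

lemma rel_hV : mkq q s d c e (hPoly d c e) * (stV q s d c e - (s : Rq q s d c e)) = 0 := by
  have h := mkq_eq_zero q s d c e (p := hPoly d c e * (Vvar - C s))
    (Ideal.subset_span (by simp))
  simpa [stV, map_intCast, sub_eq_add_neg] using h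

/-- the candidate basis family -/
def stMon (i : Fin (2 * d + 1)) : Rq q s d c e :=
  mkq q s d c e (if (i : ℕ) ≤ d then Fvar ^ (d - (i : ℕ)) else Vvar ^ ((i : ℕ) - d))

lemma stMon_eq (i : Fin (2 * d + 1)) : stMon q s d c e i =
    if (i : ℕ) ≤ d then stF q s d c e ^ (d - (i : ℕ)) else stV q s d c e ^ ((i : ℕ) - d) := by
  unfold stMon stF stV
  split <;> simp [map_pow]

def spanM : Submodule ℤ (Rq q s d c e) := Submodule.span ℤ (Set.range (stMon q s d c e))

lemma powF_mem {k : ℕ} (hk : k ≤ d) : stF q s d c e ^ k ∈ spanM q s d c e := by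
  have h2 : d - k ≤ d := by omega
  have : stMon q s d c e ⟨d - k, by omega⟩ = stF q s d c e ^ k := by
    rw [stMon_eq]
    have hcoe : ((⟨d - k, by omega⟩ : Fin (2 * d + 1)) : ℕ) = d - k := rfl
    rw [hcoe, if_pos h2, Nat.sub_sub_self hk]
  rw [← this]; exact Submodule.subset_span ⟨_, rfl⟩

lemma powV_mem {k : ℕ} (hk : k ≤ d) : stV q s d c e ^ k ∈ spanM q s d c e := by
  rcases Nat.eq_zero_or_pos k with rfl | hk1
  · simpa using powF_mem q s d c e (Nat.zero_le d)
  · have : stMon q s d c e ⟨d + k, by omega⟩ = stV q s d c e ^ k := by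
      rw [stMon_eq]
      have hcoe : ((⟨d + k, by omega⟩ : Fin (2 * d + 1)) : ℕ) = d + k := rfl
      rw [hcoe, if_neg (by omega), Nat.add_sub_cancel_left]
    rw [← this]; exact Submodule.subset_span ⟨_, rfl⟩

lemma vj_mul_F {j : ℕ} (hj : 1 ≤ j) :
    stV q s d c e ^ j * stF q s d c e = q • stV q s d c e ^ (j - 1) := by
  obtain ⟨j', rfl⟩ : ∃ j', j = j' + 1 := ⟨j - 1, by omega⟩
  have : stV q s d c e ^ (j' + 1) * stF q s d c e
      = stV q s d c e ^ j' * (stF q s d c e * stV q s d c e) := by ring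
  rw [this, rel_FV, zsmul_eq_mul]; ring_nf; simp

lemma fi_mul_V {i : ℕ} (hi : 1 ≤ i) :
    stF q s d c e ^ i * stV q s d c e = q • stF q s d c e ^ (i - 1) := by
  obtain ⟨i', rfl⟩ : ∃ i', i = i' + 1 := ⟨i - 1, by omega⟩
  have : stF q s d c e ^ (i' + 1) * stV q s d c e
      = stF q s d c e ^ i' * (stF q s d c e * stV q s d c e) := by ring
  rw [this, rel_FV, zsmul_eq_mul]; ring_nf; simp

/-- `F^i (F - s) ∈ N` for `i < d`. -/
lemma fiGF_mem {i : ℕ} (hi : i < d) :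
    stF q s d c e ^ i * (stF q s d c e - (s : Rq q s d c e)) ∈ spanM q s d c e := by
  have : stF q s d c e ^ i * (stF q s d c e - (s : Rq q s d c e))
      = stF q s d c e ^ (i + 1) - s • stF q s d c e ^ i := by
    rw [zsmul_eq_mul]; ring
  rw [this]
  exact sub_mem (powF_mem q s d c e (by omega)) (Submodule.smul_mem _ _ (powF_mem q s d c e (by omega)))

/-- `V^j (F - s) ∈ N` for `1 ≤ j ≤ d`. -/
lemma vjGF_mem {j : ℕ} (h1 : 1 ≤ j) (h2 : j ≤ d) :
    stV q s d c e ^ j * (stF q s d c e - (s : Rq q s d c e)) ∈ spanM q s d c e := by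
  have : stV q s d c e ^ j * (stF q s d c e - (s : Rq q s d c e))
      = q • stV q s d c e ^ (j - 1) - s • stV q s d c e ^ j := by
    rw [mul_sub, vj_mul_F q s d c e h1]; simp only [zsmul_eq_mul]; ring
  rw [this]
  exact sub_mem (Submodule.smul_mem _ _ (powV_mem q s d c e (by omega)))
    (Submodule.smul_mem _ _ (powV_mem q s d c e h2))

/-- `F^i (V - s) ∈ N` for `i ≤ d`. -/
lemma fiGV_mem (hd : 1 ≤ d) {i : ℕ} (h2 : i ≤ d) :
    stF q s d c e ^ i * (stV q s d c e - (s : Rq q s d c e)) ∈ spanM q s d c e := by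
  rcases Nat.eq_zero_or_pos i with rfl | h1
  · have : stF q s d c e ^ 0 * (stV q s d c e - (s : Rq q s d c e))
        = stV q s d c e ^ 1 - s • stF q s d c e ^ 0 := by
      rw [zsmul_eq_mul]; ring
    rw [this]
    exact sub_mem (powV_mem q s d c e (by omega)) (Submodule.smul_mem _ _ (powF_mem q s d c e (by omega)))
  · have : stF q s d c e ^ i * (stV q s d c e - (s : Rq q s d c e))
        = q • stF q s d c e ^ (i - 1) - s • stF q s d c e ^ i := by
      rw [mul_sub, fi_mul_V q s d c e h1]; simp only [zsmul_eq_mul]; ring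
    rw [this]
    exact sub_mem (Submodule.smul_mem _ _ (powF_mem q s d c e (by omega)))
      (Submodule.smul_mem _ _ (powF_mem q s d c e h2))

/-- `V^j (V - s) ∈ N` for `j < d`. -/
lemma vjGV_mem {j : ℕ} (hj : j < d) :
    stV q s d c e ^ j * (stV q s d c e - (s : Rq q s d c e)) ∈ spanM q s d c e := by
  have : stV q s d c e ^ j * (stV q s d c e - (s : Rq q s d c e))
      = stV q s d c e ^ (j + 1) - s • stV q s d c e ^ j := by
    rw [zsmul_eq_mul]; ring
  rw [this]
  exact sub_mem (powV_mem q s d c e (by omega)) (Submodule.smul_mem _ _ (powV_mem q s d c e (by omega)))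

lemma powF_succ_mem : stF q s d c e ^ (d + 1) ∈ spanM q s d c e := by
  have h0 := rel_hF q s d c e
  rw [mkq_hPoly, add_mul, add_mul, Finset.sum_mul, Finset.sum_mul] at h0
  have key : stF q s d c e ^ (d + 1) = s • stF q s d c e ^ d
      - (∑ i ∈ Finset.range d, c i • (stF q s d c e ^ i * (stF q s d c e - (s : Rq q s d c e))))
      - (∑ j ∈ Finset.Icc 1 d, e j • (stV q s d c e ^ j * (stF q s d c e - (s : Rq q s d c e)))) := by
    simp only [zsmul_eq_mul, ← mul_assoc]
    linear_combination h0
  rw [key]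
  refine sub_mem (sub_mem (Submodule.smul_mem _ _ (powF_mem q s d c e le_rfl)) ?_) ?_
  · exact Submodule.sum_mem _ fun i hi =>
      Submodule.smul_mem _ _ (fiGF_mem q s d c e (Finset.mem_range.mp hi))
  · refine Submodule.sum_mem _ fun j hj => ?_
    rw [Finset.mem_Icc] at hj
    exact Submodule.smul_mem _ _ (vjGF_mem q s d c e hj.1 hj.2)

lemma powV_succ_mem (hd : 1 ≤ d) (hed : e d = 1 ∨ e d = -1) :
    stV q s d c e ^ (d + 1) ∈ spanM q s d c e := by
  obtain ⟨d', rfl⟩ : ∃ d', d = d' + 1 := ⟨d - 1, by omega⟩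
  have h0 := rel_hV q s (d' + 1) c e
  rw [mkq_hPoly, add_mul, add_mul, Finset.sum_mul, Finset.sum_mul,
    Finset.sum_Icc_succ_top (by omega : 1 ≤ d' + 1)] at h0
  have key : stV q s (d' + 1) c e ^ (d' + 1 + 1) =
      (e (d' + 1)) • ( (s * e (d' + 1)) • stV q s (d' + 1) c e ^ (d' + 1)
      - stF q s (d' + 1) c e ^ (d' + 1) * (stV q s (d' + 1) c e - (s : Rq q s (d' + 1) c e))
      - (∑ i ∈ Finset.range (d' + 1), c i • (stF q s (d' + 1) c e ^ i * (stV q s (d' + 1) c e - (s : Rq q s (d' + 1) c e))))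
      - (∑ j ∈ Finset.Icc 1 d', e j • (stV q s (d' + 1) c e ^ j * (stV q s (d' + 1) c e - (s : Rq q s (d' + 1) c e))))) := by
    rcases hed with h | h <;> rw [h] at h0 ⊢ <;>
      simp only [zsmul_eq_mul, ← mul_assoc] <;> push_cast
    · linear_combination h0
    · linear_combination -h0
  rw [key]
  refine Submodule.smul_mem _ _ (sub_mem (sub_mem (sub_mem
    (Submodule.smul_mem _ _ (powV_mem q s (d' + 1) c e le_rfl))
    (fiGV_mem q s (d' + 1) c e (by omega) le_rfl)) ?_) ?_)
  · exact Submodule.sum_mem _ fun i hi =>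
      Submodule.smul_mem _ _ (fiGV_mem q s (d' + 1) c e (by omega) (by
        have := Finset.mem_range.mp hi; omega))
  · refine Submodule.sum_mem _ fun j hj => ?_
    rw [Finset.mem_Icc] at hj
    exact Submodule.smul_mem _ _ (vjGV_mem q s (d' + 1) c e (by omega))

lemma mem_mulF (i : Fin (2 * d + 1)) :
    stMon q s d c e i * stF q s d c e ∈ spanM q s d c e := by
  rw [stMon_eq]
  by_cases hle : (i : ℕ) ≤ d
  · rw [if_pos hle, ← pow_succ]
    rcases Nat.eq_zero_or_pos (i : ℕ) with h0 | h0
    · rw [h0, Nat.sub_zero]; exact powF_succ_mem q s d c e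
    · exact powF_mem q s d c e (by omega)
  · rw [if_neg hle, vj_mul_F q s d c e (by omega)]
    have hi : (i : ℕ) ≤ 2 * d := by omega
    exact Submodule.smul_mem _ _ (powV_mem q s d c e (by omega))

lemma mem_mulV (hd : 1 ≤ d) (hed : e d = 1 ∨ e d = -1) (i : Fin (2 * d + 1)) :
    stMon q s d c e i * stV q s d c e ∈ spanM q s d c e := by
  rw [stMon_eq]
  have hi : (i : ℕ) ≤ 2 * d := by omega
  by_cases hle : (i : ℕ) ≤ d
  · rw [if_pos hle]
    rcases Nat.lt_or_ge (i : ℕ) d with h0 | h0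
    · rw [fi_mul_V q s d c e (by omega)]
      exact Submodule.smul_mem _ _ (powF_mem q s d c e (by omega))
    · have : (i : ℕ) = d := by omega
      rw [this, Nat.sub_self, pow_zero, one_mul, ← pow_one (stV q s d c e)]
      exact powV_mem q s d c e hd
  · rw [if_neg hle, ← pow_succ]
    rcases Nat.lt_or_ge (i : ℕ) (2 * d) with h0 | h0
    · exact powV_mem q s d c e (by omega)
    · have : (i : ℕ) - d + 1 = d + 1 := by omega
      rw [this]; exact powV_succ_mem q s d c e hd hed

lemma spanM_mulF {x : Rq q s d c e} (hx : x ∈ spanM q s d c e) :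
    x * stF q s d c e ∈ spanM q s d c e := by
  refine Submodule.span_induction (p := fun y _ => y * stF q s d c e ∈ spanM q s d c e)
    ?_ ?_ ?_ ?_ hx
  · rintro y ⟨i, rfl⟩; exact mem_mulF q s d c e i
  · simp
  · intro y z _ _ hy hz; rw [add_mul]; exact add_mem hy hz
  · intro a y _ hy; rw [smul_mul_assoc]; exact Submodule.smul_mem _ _ hy

lemma spanM_mulV (hd : 1 ≤ d) (hed : e d = 1 ∨ e d = -1) {x : Rq q s d c e}
    (hx : x ∈ spanM q s d c e) : x * stV q s d c e ∈ spanM q s d c e := by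
  refine Submodule.span_induction (p := fun y _ => y * stV q s d c e ∈ spanM q s d c e)
    ?_ ?_ ?_ ?_ hx
  · rintro y ⟨i, rfl⟩; exact mem_mulV q s d c e hd hed i
  · simp
  · intro y z _ _ hy hz; rw [add_mul]; exact add_mem hy hz
  · intro a y _ hy; rw [smul_mul_assoc]; exact Submodule.smul_mem _ _ hy

lemma spanM_eq_top (hd : 1 ≤ d) (hed : e d = 1 ∨ e d = -1) :
    spanM q s d c e = ⊤ := by
  rw [Submodule.eq_top_iff']
  intro x
  obtain ⟨p, rfl⟩ := Ideal.Quotient.mk_surjective x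
  show mkq q s d c e p ∈ spanM q s d c e
  induction p using MvPolynomial.induction_on with
  | C a =>
      have h1 : (C a : MvPolynomial (Fin 2) ℤ) = (a : MvPolynomial (Fin 2) ℤ) :=
        (eq_intCast (C : ℤ →+* MvPolynomial (Fin 2) ℤ) a)
      have h2 : mkq q s d c e (C a) = a • stF q s d c e ^ 0 := by
        rw [h1, map_intCast, pow_zero, zsmul_eq_mul, mul_one]
      rw [h2]
      exact Submodule.smul_mem _ _ (powF_mem q s d c e (Nat.zero_le d))
  | add p1 p2 hp1 hp2 => rw [map_add]; exact add_mem hp1 hp2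
  | mul_X p n hp =>
      rw [map_mul]
      fin_cases n
      · exact spanM_mulF q s d c e hp
      · exact spanM_mulV q s d c e hd hed hp


noncomputable def HqP : Polynomial ℚ :=
  Polynomial.X ^ (2 * d) +
    (∑ i ∈ Finset.range d, Polynomial.C (c i : ℚ) * Polynomial.X ^ (d + i)) +
    ∑ j ∈ Finset.Icc 1 d, Polynomial.C ((e j : ℚ) * (q : ℚ) ^ j) * Polynomial.X ^ (d - j)

noncomputable def PqP : Polynomial ℚ := HqP q d c e * (Polynomial.X - Polynomial.C (s : ℚ))

lemma HqP_rest_degree (hd : 1 ≤ d) :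
    ((∑ i ∈ Finset.range d, Polynomial.C (c i : ℚ) * Polynomial.X ^ (d + i)) +
      ∑ j ∈ Finset.Icc 1 d, Polynomial.C ((e j : ℚ) * (q : ℚ) ^ j)
        * Polynomial.X ^ (d - j)).degree < ((2 * d : ℕ) : WithBot ℕ) := by
  apply lt_of_le_of_lt (Polynomial.degree_add_le _ _)
  rw [max_lt_iff]
  constructor
  · apply lt_of_le_of_lt (Polynomial.degree_sum_le _ _)
    rw [Finset.sup_lt_iff (by exact_mod_cast WithBot.bot_lt_coe (2 * d))]
    intro i hi
    refine lt_of_le_of_lt (Polynomial.degree_C_mul_X_pow_le _ _) ?_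
    have hlt : d + i < 2 * d := by have := Finset.mem_range.mp hi; omega
    exact_mod_cast hlt
  · apply lt_of_le_of_lt (Polynomial.degree_sum_le _ _)
    rw [Finset.sup_lt_iff (by exact_mod_cast WithBot.bot_lt_coe (2 * d))]
    intro j hj
    refine lt_of_le_of_lt (Polynomial.degree_C_mul_X_pow_le _ _) ?_
    have hlt : d - j < 2 * d := by have := (Finset.mem_Icc.mp hj).1; omega
    exact_mod_cast hlt

lemma HqP_assoc : HqP q d c e = Polynomial.X ^ (2 * d) +
    ((∑ i ∈ Finset.range d, Polynomial.C (c i : ℚ) * Polynomial.X ^ (d + i)) +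
      ∑ j ∈ Finset.Icc 1 d, Polynomial.C ((e j : ℚ) * (q : ℚ) ^ j)
        * Polynomial.X ^ (d - j)) := by
  rw [HqP, add_assoc]

lemma HqP_monic (hd : 1 ≤ d) : (HqP q d c e).Monic := by
  rw [HqP_assoc]
  exact Polynomial.monic_X_pow_add (HqP_rest_degree q d c e hd)

lemma HqP_degree (hd : 1 ≤ d) : (HqP q d c e).degree = (2 * d : ℕ) := by
  rw [HqP_assoc, add_comm, Polynomial.degree_add_eq_right_of_degree_lt
    (by rw [Polynomial.degree_X_pow]; exact HqP_rest_degree q d c e hd),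
    Polynomial.degree_X_pow]

lemma PqP_monic (hd : 1 ≤ d) : (PqP q s d c e).Monic :=
  (HqP_monic q d c e hd).mul (Polynomial.monic_X_sub_C _)

lemma PqP_natDegree (hd : 1 ≤ d) : (PqP q s d c e).natDegree = 2 * d + 1 := by
  rw [PqP, Polynomial.natDegree_mul (HqP_monic q d c e hd).ne_zero
    (Polynomial.X_sub_C_ne_zero _), Polynomial.natDegree_X_sub_C,
    Polynomial.natDegree_eq_of_degree_eq_some (HqP_degree q d c e hd)]

lemma PqP_coeff_zero (hd : 1 ≤ d) :
    (PqP q s d c e).coeff 0 = (e d : ℚ) * (q : ℚ) ^ d * (-(s : ℚ)) := by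
  rw [PqP, Polynomial.mul_coeff_zero]
  have h2 : (Polynomial.X - Polynomial.C (s : ℚ)).coeff 0 = -(s : ℚ) := by simp
  have h1 : (HqP q d c e).coeff 0 = (e d : ℚ) * (q : ℚ) ^ d := by
    rw [HqP, Polynomial.coeff_add, Polynomial.coeff_add, Polynomial.coeff_X_pow,
      if_neg (by omega), Polynomial.finset_sum_coeff, Polynomial.finset_sum_coeff]
    rw [Finset.sum_eq_zero (fun i hi => by
      rw [Polynomial.coeff_C_mul, Polynomial.coeff_X_pow, if_neg (by omega)]; ring)]
    rw [Finset.sum_eq_single d (fun j hj hne => by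
      rw [Polynomial.coeff_C_mul, Polynomial.coeff_X_pow,
        if_neg (by have := Finset.mem_Icc.mp hj; omega)]; ring)
      (fun hd' => absurd (Finset.mem_Icc.mpr ⟨hd, le_rfl⟩) hd')]
    rw [Polynomial.coeff_C_mul, Polynomial.coeff_X_pow, if_pos (by omega)]
    ring
  rw [h1, h2]

lemma PqP_coeff_zero_ne (hq : q ≠ 0) (hs : s ^ 2 = q) (hd : 1 ≤ d)
    (hed : e d = 1 ∨ e d = -1) : (PqP q s d c e).coeff 0 ≠ 0 := by
  rw [PqP_coeff_zero q s d c e hd]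
  have hs0 : s ≠ 0 := by rintro rfl; simp at hs; exact hq hs.symm
  have he' : (e d : ℚ) ≠ 0 := by rcases hed with h | h <;> rw [h] <;> norm_num
  have hq' : (q : ℚ) ≠ 0 := by exact_mod_cast hq
  have hs' : (s : ℚ) ≠ 0 := by exact_mod_cast hs0
  intro hcon
  rcases mul_eq_zero.mp hcon with h1 | h1
  · rcases mul_eq_zero.mp h1 with h2 | h2
    · exact he' h2
    · exact pow_ne_zero d hq' h2
  · exact hs' (neg_eq_zero.mp h1)




noncomputable abbrev Tring := AdjoinRoot (PqP q s d c e)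

noncomputable def tT : Tring q s d c e := AdjoinRoot.root _

noncomputable def uT : Tring q s d c e :=
  algebraMap ℚ _ (-(PqP q s d c e).coeff 0)⁻¹ *
    AdjoinRoot.mk _ (PqP q s d c e).divX

lemma t_mul_u (hc0 : (PqP q s d c e).coeff 0 ≠ 0) :
    tT q s d c e * uT q s d c e = 1 := by
  have h0 : AdjoinRoot.mk (PqP q s d c e) (PqP q s d c e) = 0 := AdjoinRoot.mk_self
  have h1 := congrArg (AdjoinRoot.mk (PqP q s d c e))
    (Polynomial.X_mul_divX_add (PqP q s d c e))
  rw [map_add, map_mul, AdjoinRoot.mk_X, h0, AdjoinRoot.mk_C] at h1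
  have h2 : tT q s d c e * AdjoinRoot.mk _ (PqP q s d c e).divX
      = algebraMap ℚ _ (-(PqP q s d c e).coeff 0) := by
    rw [map_neg, AdjoinRoot.algebraMap_eq, tT]
    linear_combination h1
  rw [uT, ← mul_assoc, mul_comm (tT q s d c e) (algebraMap ℚ _ _), mul_assoc, h2,
    ← map_mul, inv_mul_cancel₀ (by simpa using hc0), map_one]

lemma t_pow_mul_u_pow (hc0 : (PqP q s d c e).coeff 0 ≠ 0) {n k : ℕ} (h : k ≤ n) :
    tT q s d c e ^ n * uT q s d c e ^ k = tT q s d c e ^ (n - k) := by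
  induction k with
  | zero => simp
  | succ k ih =>
      have hk : k ≤ n := by omega
      have h1 : tT q s d c e ^ n * uT q s d c e ^ (k + 1)
          = (tT q s d c e ^ n * uT q s d c e ^ k) * uT q s d c e := by ring
      rw [h1, ih hk]
      have h2 : n - k = (n - (k + 1)) + 1 := by omega
      rw [h2, pow_succ, mul_assoc, t_mul_u q s d c e hc0, mul_one]

/-- The evaluation map `ℤ[F,V] → T`. -/
noncomputable def psiT : MvPolynomial (Fin 2) ℤ →ₐ[ℤ] Tring q s d c e :=
  MvPolynomial.aeval
    (fun i : Fin 2 => if i = 0 then tT q s d c e else (q : Tring q s d c e) * uT q s d c e)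

lemma psiT_F : psiT q s d c e Fvar = tT q s d c e := by
  simp [psiT, Fvar]

lemma psiT_V : psiT q s d c e Vvar = (q : Tring q s d c e) * uT q s d c e := by
  simp [psiT, Vvar]




lemma psiT_hPoly_mul_td (hc0 : (PqP q s d c e).coeff 0 ≠ 0) :
    tT q s d c e ^ d * psiT q s d c e (hPoly d c e)
      = AdjoinRoot.mk (PqP q s d c e) (HqP q d c e) := by
  have hpsi : psiT q s d c e (hPoly d c e) = tT q s d c e ^ d
      + (∑ i ∈ Finset.range d, (c i : Tring q s d c e) * tT q s d c e ^ i)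
      + ∑ j ∈ Finset.Icc 1 d,
          (e j : Tring q s d c e) * ((q : Tring q s d c e) * uT q s d c e) ^ j := by
    simp only [hPoly, map_add, map_sum, map_mul, map_pow, psiT_F, psiT_V]
    simp [psiT]
  have hmk : AdjoinRoot.mk (PqP q s d c e) (HqP q d c e)
      = tT q s d c e ^ (2 * d)
      + (∑ i ∈ Finset.range d, (c i : Tring q s d c e) * tT q s d c e ^ (d + i))
      + ∑ j ∈ Finset.Icc 1 d,
          (e j : Tring q s d c e) * (q : Tring q s d c e) ^ j * tT q s d c e ^ (d - j) := by
    simp only [HqP, map_add, map_sum, map_mul, map_pow, AdjoinRoot.mk_X, AdjoinRoot.mk_C,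
      ← AdjoinRoot.algebraMap_eq, map_intCast, tT]
    try push_cast
    try ring_nf
  rw [hpsi, hmk, mul_add, mul_add, Finset.mul_sum, Finset.mul_sum]
  congr 1
  · congr 1
    · rw [← pow_add]; congr 1; omega
    · exact Finset.sum_congr rfl fun i _ => by rw [← mul_assoc,
        mul_comm (tT q s d c e ^ d) ((c i : Tring q s d c e)), mul_assoc, ← pow_add]
  · refine Finset.sum_congr rfl fun j hj => ?_
    have hjd : j ≤ d := (Finset.mem_Icc.mp hj).2
    have hcalc : tT q s d c e ^ d
        * ((e j : Tring q s d c e) * ((q : Tring q s d c e) * uT q s d c e) ^ j)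
        = (e j : Tring q s d c e) * (q : Tring q s d c e) ^ j
          * (tT q s d c e ^ d * uT q s d c e ^ j) := by
      rw [mul_pow]; ring
    rw [hcalc, t_pow_mul_u_pow q s d c e hc0 hjd]




lemma psiT_h_mul (hc0 : (PqP q s d c e).coeff 0 ≠ 0) :
    psiT q s d c e (hPoly d c e) * (tT q s d c e - (s : Tring q s d c e)) = 0 := by
  have hXs : tT q s d c e - (s : Tring q s d c e)
      = AdjoinRoot.mk (PqP q s d c e) (Polynomial.X - Polynomial.C (s : ℚ)) := by
    rw [map_sub, AdjoinRoot.mk_X, AdjoinRoot.mk_C, ← AdjoinRoot.algebraMap_eq,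
      map_intCast, tT]
  have h1 : tT q s d c e ^ d
      * (psiT q s d c e (hPoly d c e) * (tT q s d c e - (s : Tring q s d c e))) = 0 := by
    rw [← mul_assoc, psiT_hPoly_mul_td q s d c e hc0, hXs, ← map_mul]
    have hP : HqP q d c e * (Polynomial.X - Polynomial.C (s : ℚ)) = PqP q s d c e := rfl
    rw [hP]
    exact AdjoinRoot.mk_self
  have h2 : psiT q s d c e (hPoly d c e) * (tT q s d c e - (s : Tring q s d c e))
      = uT q s d c e ^ d * (tT q s d c e ^ d
        * (psiT q s d c e (hPoly d c e) * (tT q s d c e - (s : Tring q s d c e)))) := by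
    rw [← mul_assoc, mul_comm (uT q s d c e ^ d) (tT q s d c e ^ d),
      t_pow_mul_u_pow q s d c e hc0 le_rfl, Nat.sub_self, pow_zero, one_mul]
  rw [h2, h1, mul_zero]

lemma psiT_gen1 (hc0 : (PqP q s d c e).coeff 0 ≠ 0) :
    psiT q s d c e (Fvar * Vvar - C q) = 0 := by
  have hCq : psiT q s d c e (C q) = (q : Tring q s d c e) := by
    simp [psiT]
  rw [map_sub, map_mul, psiT_F, psiT_V, hCq]
  linear_combination (q : Tring q s d c e) * t_mul_u q s d c e hc0

lemma psiT_gen2 (hc0 : (PqP q s d c e).coeff 0 ≠ 0) :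
    psiT q s d c e (hPoly d c e * (Fvar - C s)) = 0 := by
  have hCs : psiT q s d c e (C s) = (s : Tring q s d c e) := by
    simp [psiT]
  rw [map_mul, map_sub, psiT_F, hCs]
  exact psiT_h_mul q s d c e hc0

lemma psiT_gen3 (hs : s ^ 2 = q) (hc0 : (PqP q s d c e).coeff 0 ≠ 0) :
    psiT q s d c e (hPoly d c e * (Vvar - C s)) = 0 := by
  have hCs : psiT q s d c e (C s) = (s : Tring q s d c e) := by
    simp [psiT]
  have hsq : (s : Tring q s d c e) * (s : Tring q s d c e) = (q : Tring q s d c e) := by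
    have : ((s ^ 2 : ℤ) : Tring q s d c e) = (q : Tring q s d c e) := by rw [hs]
    push_cast at this
    linear_combination this
  have key : (q : Tring q s d c e) * uT q s d c e - (s : Tring q s d c e)
      = (-(s : Tring q s d c e) * uT q s d c e)
        * (tT q s d c e - (s : Tring q s d c e)) := by
    linear_combination (-(uT q s d c e)) * hsq
      + (s : Tring q s d c e) * t_mul_u q s d c e hc0
  rw [map_mul, map_sub, psiT_V, hCs, key]
  have : psiT q s d c e (hPoly d c e)
      * ((-(s : Tring q s d c e) * uT q s d c e)
        * (tT q s d c e - (s : Tring q s d c e)))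
      = (-(s : Tring q s d c e) * uT q s d c e)
        * (psiT q s d c e (hPoly d c e) * (tT q s d c e - (s : Tring q s d c e))) := by
    ring
  rw [this, psiT_h_mul q s d c e hc0, mul_zero]


lemma stIdeal_le_ker (hs : s ^ 2 = q) (hc0 : (PqP q s d c e).coeff 0 ≠ 0) :
    ∀ p ∈ stIdeal q s d c e, psiT q s d c e p = 0 := by
  have hle : stIdeal q s d c e ≤ RingHom.ker (psiT q s d c e).toRingHom := by
    rw [stIdeal, Ideal.span_le]
    rintro x hx
    simp only [Set.mem_insert_iff, Set.mem_singleton_iff] at hx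
    rcases hx with rfl | rfl | rfl
    · exact SetLike.mem_coe.mpr (RingHom.mem_ker.mpr (psiT_gen1 q s d c e hc0))
    · exact SetLike.mem_coe.mpr (RingHom.mem_ker.mpr (psiT_gen2 q s d c e hc0))
    · exact SetLike.mem_coe.mpr (RingHom.mem_ker.mpr (psiT_gen3 q s d c e hs hc0))
  intro p hp
  exact RingHom.mem_ker.mp (hle hp)

set_option maxHeartbeats 2000000 in
lemma stMon_linearIndependent (hq : q ≠ 0) (hs : s ^ 2 = q) (hd : 1 ≤ d)
    (hed : e d = 1 ∨ e d = -1) : LinearIndependent ℤ (stMon q s d c e) := by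
  have hc0 := PqP_coeff_zero_ne q s d c e hq hs hd hed
  -- the lifted ring hom
  let φ : Rq q s d c e →+* Tring q s d c e :=
    Ideal.Quotient.lift _ (psiT q s d c e).toRingHom (stIdeal_le_ker q s d c e hs hc0)
  let φl : Rq q s d c e →ₗ[ℤ] Tring q s d c e := φ.toAddMonoidHom.toIntLinearMap
  -- the image family
  set wFam : Fin (2 * d + 1) → Tring q s d c e := fun i =>
    if (i : ℕ) ≤ d then tT q s d c e ^ (d - (i : ℕ))
    else ((q : Tring q s d c e) * uT q s d c e) ^ ((i : ℕ) - d) with hwFam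
  have hcomp : φl ∘ stMon q s d c e = wFam := by
    funext i
    show φ (Ideal.Quotient.mk _ _) = _
    rw [Ideal.Quotient.lift_mk]
    by_cases hle : (i : ℕ) ≤ d
    · rw [if_pos hle]
      show psiT q s d c e (Fvar ^ (d - (i : ℕ))) = _
      rw [map_pow, psiT_F]
      simp [hwFam, hle]
    · rw [if_neg hle]
      show psiT q s d c e (Vvar ^ ((i : ℕ) - d)) = _
      rw [map_pow, psiT_V]
      simp [hwFam, hle]
  -- linear independence of powers of the root
  let pb := AdjoinRoot.powerBasis' (PqP_monic q s d c e hd)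
  have hdim : pb.dim = 2 * d + 1 := PqP_natDegree q s d c e hd
  have li0 : LinearIndependent ℚ (fun k : Fin (2 * d + 1) => tT q s d c e ^ (k : ℕ)) := by
    have h := (pb.basis.reindex (finCongr hdim)).linearIndependent
    have heq : ⇑(pb.basis.reindex (finCongr hdim))
        = fun k : Fin (2 * d + 1) => tT q s d c e ^ (k : ℕ) := by
      funext k
      rw [Module.Basis.reindex_apply, pb.basis_eq_pow]
      simp [pb, tT, AdjoinRoot.powerBasis'_gen]
    rwa [heq] at h
  have li2 : LinearIndependent ℚ
      (fun i : Fin (2 * d + 1) => tT q s d c e ^ (2 * d - (i : ℕ))) := by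
    have hinj : Function.Injective
        (fun i : Fin (2 * d + 1) => (⟨2 * d - (i : ℕ), by omega⟩ : Fin (2 * d + 1))) := by
      intro a b hab
      have h1 : 2 * d - (a : ℕ) = 2 * d - (b : ℕ) := congrArg Fin.val hab
      have ha : (a : ℕ) ≤ 2 * d := by omega
      have hb : (b : ℕ) ≤ 2 * d := by omega
      exact Fin.ext (by omega)
    have h := li0.comp
      (fun i : Fin (2 * d + 1) => (⟨2 * d - (i : ℕ), by omega⟩ : Fin (2 * d + 1))) hinj
    have heq : ((fun k : Fin (2 * d + 1) => tT q s d c e ^ (k : ℕ)) ∘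
        (fun i : Fin (2 * d + 1) => (⟨2 * d - (i : ℕ), by omega⟩ : Fin (2 * d + 1))))
        = fun i : Fin (2 * d + 1) => tT q s d c e ^ (2 * d - (i : ℕ)) := by
      funext i
      simp
    rwa [heq] at h
  have li3 : LinearIndependent ℚ (fun i : Fin (2 * d + 1) =>
      ((q : ℚ) ^ ((i : ℕ) - d)) • tT q s d c e ^ (2 * d - (i : ℕ))) := by
    have hq' : (q : ℚ) ≠ 0 := by exact_mod_cast hq
    have h := li2.units_smul
      (fun i : Fin (2 * d + 1) => Units.mk0 ((q : ℚ) ^ ((i : ℕ) - d)) (pow_ne_zero _ hq'))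
    have heq : ((fun i : Fin (2 * d + 1) =>
          Units.mk0 ((q : ℚ) ^ ((i : ℕ) - d)) (pow_ne_zero _ hq')) •
          (fun i : Fin (2 * d + 1) => tT q s d c e ^ (2 * d - (i : ℕ))))
        = fun i : Fin (2 * d + 1) =>
          ((q : ℚ) ^ ((i : ℕ) - d)) • tT q s d c e ^ (2 * d - (i : ℕ)) := by
      funext i
      simp [Units.smul_def]
    rwa [heq] at h
  -- multiplication by t^d
  have hLinj : Function.Injective (LinearMap.mulLeft ℚ (tT q s d c e ^ d)) := by
    intro a b hab
    simp only [LinearMap.mulLeft_apply] at hab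
    have h1 : uT q s d c e ^ d * (tT q s d c e ^ d * a)
        = uT q s d c e ^ d * (tT q s d c e ^ d * b) := by rw [hab]
    rwa [← mul_assoc, ← mul_assoc, mul_comm (uT q s d c e ^ d) (tT q s d c e ^ d),
      t_pow_mul_u_pow q s d c e hc0 le_rfl, Nat.sub_self, pow_zero, one_mul, one_mul] at h1
  have liW : LinearIndependent ℚ wFam := by
    apply LinearIndependent.of_comp (LinearMap.mulLeft ℚ (tT q s d c e ^ d))
    have heq : (LinearMap.mulLeft ℚ (tT q s d c e ^ d)) ∘ wFam
        = fun i : Fin (2 * d + 1) =>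
          ((q : ℚ) ^ ((i : ℕ) - d)) • tT q s d c e ^ (2 * d - (i : ℕ)) := by
      funext i
      simp only [Function.comp_apply, LinearMap.mulLeft_apply, hwFam]
      by_cases hle : (i : ℕ) ≤ d
      · rw [if_pos hle]
        have h1 : (i : ℕ) - d = 0 := by omega
        rw [h1, pow_zero, one_smul, ← pow_add]
        congr 1
        omega
      · rw [if_neg hle]
        have hle2 : (i : ℕ) - d ≤ d := by omega
        rw [mul_pow, ← mul_assoc, mul_comm (tT q s d c e ^ d) ((q : Tring q s d c e) ^ ((i : ℕ) - d)),
          mul_assoc, t_pow_mul_u_pow q s d c e hc0 hle2]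
        have h2 : d - ((i : ℕ) - d) = 2 * d - (i : ℕ) := by omega
        rw [h2, Algebra.smul_def, map_pow, map_intCast]
    rw [heq]
    exact li3
  have liWZ : LinearIndependent ℤ wFam :=
    LinearIndependent.restrict_scalars' ℤ liW
  apply LinearIndependent.of_comp φl
  rw [hcomp]
  exact liWZ

end StmtAux

/-- Let `q` be a nonzero integer with `s ^ 2 = q`, `d ≥ 1`, and `h₀` as above with
`e_d ∈ {1, -1}`.  Then `ℤ[F,V]/(FV - q, h₀(F - s), h₀(V - s))` is a free `ℤ`-module of rank
`2d + 1`, and the residue classes of the monomials `F^d, …, F, 1, V, …, V^d` form a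
`ℤ`-basis. -/
theorem stmt_5 (q : ℤ) (hq : q ≠ 0) (s : ℤ) (hs : s ^ 2 = q)
    (d : ℕ) (hd : 1 ≤ d) (c e : ℕ → ℤ) (hed : e d = 1 ∨ e d = -1) :
    Module.Free ℤ
      (MvPolynomial (Fin 2) ℤ ⧸
        Ideal.span {Fvar * Vvar - C q, hPoly d c e * (Fvar - C s),
          hPoly d c e * (Vvar - C s)}) ∧
    ∃ b : Module.Basis (Fin (2 * d + 1)) ℤ
        (MvPolynomial (Fin 2) ℤ ⧸
          Ideal.span {Fvar * Vvar - C q, hPoly d c e * (Fvar - C s),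
            hPoly d c e * (Vvar - C s)}),
      ∀ i : Fin (2 * d + 1),
        b i = Ideal.Quotient.mk
          (Ideal.span {Fvar * Vvar - C q, hPoly d c e * (Fvar - C s),
            hPoly d c e * (Vvar - C s)})
          (if (i : ℕ) ≤ d then Fvar ^ (d - (i : ℕ)) else Vvar ^ ((i : ℕ) - d)) := by
  have hli := stMon_linearIndependent q s d c e hq hs hd hed
  have hsp := spanM_eq_top q s d c e hd hed
  have hsp' : ⊤ ≤ Submodule.span ℤ (Set.range (stMon q s d c e)) := by
    rw [show Submodule.span ℤ (Set.range (stMon q s d c e)) = spanM q s d c e from rfl, hsp]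
  let b : Module.Basis (Fin (2 * d + 1)) ℤ (Rq q s d c e) := Module.Basis.mk hli hsp'
  refine ⟨Module.Free.of_basis b, b, fun i => ?_⟩
  show (Module.Basis.mk hli hsp') i = _
  rw [Module.Basis.mk_apply]
  rfl
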